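/- There exists a compact set K ⊆ ℝ² with positive Lebesgue measure such that K + S¹ has empty interior. -/

import Mathlib

open Pointwise

open MeasureTheory

noncomputable def sSeq3 : ℕ → EuclideanSpace ℝ (Fin 2) :=
  TopologicalSpace.denseSeq (EuclideanSpace ℝ (Fin 2))

lemma sSeq3_dense : DenseRange sSeq3 :=
  TopologicalSpace.denseRange_denseSeq (EuclideanSpace ℝ (Fin 2))

noncomputable def eta3 (n : ℕ) : ℝ := (1/2) ^ n / 8

lemma eta3_pos (n : ℕ) : 0 < eta3 n := by unfold eta3; positivity

lemma eta3_lt (n : ℕ) : eta3 n < 1 := by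
  have : (1/2:ℝ) ^ n ≤ 1 := pow_le_one₀ (by norm_num) (by norm_num)
  unfold eta3; linarith

noncomputable def USet3 (n : ℕ) : Set (EuclideanSpace ℝ (Fin 2)) :=
  Metric.ball (sSeq3 n) (1 + eta3 n) \ Metric.closedBall (sSeq3 n) (1 - eta3 n)

lemma USet3_open (n : ℕ) : IsOpen (USet3 n) :=
  Metric.isOpen_ball.sdiff Metric.isClosed_closedBall

noncomputable def KSet3 : Set (EuclideanSpace ℝ (Fin 2)) :=
  Metric.closedBall (0:EuclideanSpace ℝ (Fin 2)) 2 \ ⋃ n, USet3 n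

lemma volball3 (x : EuclideanSpace ℝ (Fin 2)) {r : ℝ} (hr : 0 ≤ r) :
    volume (Metric.ball x r)
      = ENNReal.ofReal (r ^ 2) * volume (Metric.ball (0:EuclideanSpace ℝ (Fin 2)) 1) := by
  rw [Measure.addHaar_ball _ _ hr]
  norm_num

lemma USet3_vol (n : ℕ) : volume (USet3 n)
    ≤ ENNReal.ofReal (4 * eta3 n) * volume (Metric.ball (0:EuclideanSpace ℝ (Fin 2)) 1) := by
  have h1 : (0:ℝ) ≤ 1 - eta3 n := by linarith [eta3_lt n]
  have h2 : (0:ℝ) ≤ 1 + eta3 n := by linarith [eta3_pos n]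
  have heq : volume (USet3 n) = volume (Metric.ball (sSeq3 n) (1 + eta3 n))
      - volume (Metric.closedBall (sSeq3 n) (1 - eta3 n)) :=
    measure_diff (Metric.closedBall_subset_ball (by linarith [eta3_pos n]))
      measurableSet_closedBall.nullMeasurableSet measure_closedBall_lt_top.ne
  have hsub : volume (USet3 n) ≤ volume (Metric.ball (sSeq3 n) (1 + eta3 n))
      - volume (Metric.ball (sSeq3 n) (1 - eta3 n)) := by
    rw [heq]
    exact tsub_le_tsub_left (measure_mono Metric.ball_subset_closedBall) _
  rw [volball3 _ h2, volball3 _ h1] at hsub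
  refine hsub.trans ?_
  rw [tsub_le_iff_right, ← add_mul, ← ENNReal.ofReal_add (by nlinarith [eta3_pos n]) (by positivity)]
  gcongr
  nlinarith [eta3_pos n]

lemma eta3_tsum : ∑' n, 4 * eta3 n = 1 := by
  have he : ∀ n, 4 * eta3 n = (1/2:ℝ)^n * (1/2) := by
    intro n; unfold eta3; ring
  simp only [he]
  rw [tsum_mul_right, tsum_geometric_of_lt_one (by norm_num) (by norm_num)]
  norm_num

lemma USum3_vol : volume (⋃ n, USet3 n)
    ≤ ENNReal.ofReal 1 * volume (Metric.ball (0:EuclideanSpace ℝ (Fin 2)) 1) := by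
  refine (measure_iUnion_le _).trans ?_
  calc ∑' n, volume (USet3 n)
      ≤ ∑' n, ENNReal.ofReal (4 * eta3 n)
          * volume (Metric.ball (0:EuclideanSpace ℝ (Fin 2)) 1) :=
        ENNReal.tsum_le_tsum USet3_vol
    _ = (∑' n, ENNReal.ofReal (4 * eta3 n))
          * volume (Metric.ball (0:EuclideanSpace ℝ (Fin 2)) 1) := ENNReal.tsum_mul_right
    _ = ENNReal.ofReal 1 * volume (Metric.ball (0:EuclideanSpace ℝ (Fin 2)) 1) := by
        congr 1
        rw [← ENNReal.ofReal_tsum_of_nonneg (fun n => by nlinarith [eta3_pos n])]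
        · rw [eta3_tsum]
        · have he : ∀ n, 4 * eta3 n = (1/2:ℝ)^n * (1/2) := by
            intro n; unfold eta3; ring
          simp only [he]
          exact Summable.mul_right _
            (summable_geometric_of_lt_one (by norm_num) (by norm_num))

lemma KSet3_vol_pos : 0 < volume KSet3 := by
  have hball_pos : (0:ENNReal) < volume (Metric.ball (0:EuclideanSpace ℝ (Fin 2)) 1) :=
    Metric.measure_ball_pos _ _ one_pos
  have hball_fin : volume (Metric.ball (0:EuclideanSpace ℝ (Fin 2)) 1) < ⊤ :=
    measure_ball_lt_top
  have hBig : volume (Metric.closedBall (0:EuclideanSpace ℝ (Fin 2)) 2)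
      = ENNReal.ofReal 4 * volume (Metric.ball (0:EuclideanSpace ℝ (Fin 2)) 1) := by
    rw [Measure.addHaar_closedBall _ _ (by norm_num : (0:ℝ) ≤ 2)]
    norm_num
  by_contra h
  push_neg at h
  have hK0 : volume KSet3 = 0 := le_antisymm h zero_le
  have hle : volume (Metric.closedBall (0:EuclideanSpace ℝ (Fin 2)) 2)
      ≤ volume KSet3 + volume (⋃ n, USet3 n) := by
    refine (measure_mono ?_).trans (measure_union_le _ _)
    intro x hx
    by_cases hxU : x ∈ ⋃ n, USet3 n
    · exact Or.inr hxU
    · exact Or.inl ⟨hx, hxU⟩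
  rw [hK0, zero_add, hBig] at hle
  have hlt : ENNReal.ofReal 1 * volume (Metric.ball (0:EuclideanSpace ℝ (Fin 2)) 1)
      < ENNReal.ofReal 4 * volume (Metric.ball (0:EuclideanSpace ℝ (Fin 2)) 1) := by
    refine ENNReal.mul_lt_mul_left hball_pos.ne' hball_fin.ne ?_
    exact (ENNReal.ofReal_lt_ofReal_iff_of_nonneg (by norm_num)).mpr (by norm_num)
  exact absurd (hle.trans USum3_vol) hlt.not_ge

theorem stmt_3 :
    ∃ K : Set (EuclideanSpace ℝ (Fin 2)),
      IsCompact K ∧ 0 < volume K ∧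
      interior (K + Metric.sphere (0 : EuclideanSpace ℝ (Fin 2)) 1) = ∅ := by
  refine ⟨KSet3, ?_, KSet3_vol_pos, ?_⟩
  · exact (isCompact_closedBall _ _).diff (isOpen_iUnion USet3_open)
  · rw [interior_eq_empty_iff_dense_compl]
    refine Dense.mono ?_ sSeq3_dense
    rintro x ⟨n, rfl⟩
    intro hmem
    rw [Set.mem_add] at hmem
    obtain ⟨k, hk, y, hy, hsum⟩ := hmem
    have hyn : ‖y‖ = 1 := by simpa using hy
    have hdist : dist k (sSeq3 n) = 1 := by
      rw [← hsum, dist_self_add_right, hyn]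
    have hkU : k ∈ USet3 n := by
      constructor
      · rw [Metric.mem_ball, hdist]; linarith [eta3_pos n]
      · simp only [Metric.mem_closedBall, hdist, Set.mem_setOf_eq]
        intro hcon; linarith [eta3_pos n]
    exact hk.2 (Set.mem_iUnion.mpr ⟨n, hkU⟩)
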